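/- In the eight-sector configuration, the two alternative area sums are equal, S₁+S₃+S₅+S₇ = S₂+S₄+S₆+S₈, if and only if (r₀²/2)·[sin 2(θ₂−θ₀) − sin 2(θ₁−θ₀) + sin 2(θ₄−θ₀) − sin 2(θ₃−θ₀)] + a²·(θ₂ − θ₁ + θ₄ − θ₃ − π/2) = 0. -/

import Mathlib

open Real

set_option maxHeartbeats 1000000

/-- Eight-sector configuration: the alternative area sums are equal iff
(r₀²/2)[sin 2(θ₂−θ₀) − sin 2(θ₁−θ₀) + sin 2(θ₄−θ₀) − sin 2(θ₃−θ₀)]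
  + a²(θ₂ − θ₁ + θ₄ − θ₃ − π/2) = 0. -/
theorem eight_sector_equal_iff (a r₀ θ₀ θ₁ θ₂ θ₃ θ₄ : ℝ)
    (ha : 0 < a) (hr₀ : 0 ≤ r₀) (hr₀a : r₀ ≤ a)
    (h12 : θ₁ < θ₂) (h23 : θ₂ < θ₃) (h34 : θ₃ < θ₄) (h41 : θ₄ < θ₁ + π)
    (S : ℝ → ℝ → ℝ)
    (hS : ∀ α β : ℝ, α ≤ β → S α β = (1 / 2) * ∫ θ in α..β,
      (r₀ * Real.cos (θ - θ₀) + Real.sqrt (a ^ 2 - r₀ ^ 2 * Real.sin (θ - θ₀) ^ 2)) ^ 2) :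
    S θ₁ θ₂ + S θ₃ θ₄ + S (θ₁ + π) (θ₂ + π) + S (θ₃ + π) (θ₄ + π) =
      S θ₂ θ₃ + S θ₄ (θ₁ + π) + S (θ₂ + π) (θ₃ + π) + S (θ₄ + π) (θ₁ + 2 * π) ↔
    r₀ ^ 2 / 2 * (Real.sin (2 * (θ₂ - θ₀)) - Real.sin (2 * (θ₁ - θ₀)) +
      Real.sin (2 * (θ₄ - θ₀)) - Real.sin (2 * (θ₃ - θ₀))) +
      a ^ 2 * (θ₂ - θ₁ + θ₄ - θ₃ - π / 2) = 0 := by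
  have hpi := Real.pi_pos
  set f : ℝ → ℝ := fun θ =>
    (r₀ * Real.cos (θ - θ₀) + Real.sqrt (a ^ 2 - r₀ ^ 2 * Real.sin (θ - θ₀) ^ 2)) ^ 2 with hf
  have hcont : Continuous f := by fun_prop
  have hsum : ∀ θ : ℝ, f θ + f (θ + π) = 2 * a ^ 2 + 2 * r₀ ^ 2 * Real.cos (2 * (θ - θ₀)) := by
    intro θ
    have h1 : θ + π - θ₀ = (θ - θ₀) + π := by ring
    simp only [hf, h1, Real.cos_add_pi, Real.sin_add_pi, neg_sq]
    have hnn : 0 ≤ a ^ 2 - r₀ ^ 2 * Real.sin (θ - θ₀) ^ 2 := by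
      nlinarith [Real.sin_sq_le_one (θ - θ₀), sq_nonneg (Real.sin (θ - θ₀)), sq_nonneg r₀]
    have hs := Real.sq_sqrt hnn
    nlinarith [hs, Real.cos_two_mul (θ - θ₀), Real.sin_sq_add_cos_sq (θ - θ₀)]
  have hint : ∀ α β : ℝ,
      (∫ θ in α..β, (2 * a ^ 2 + 2 * r₀ ^ 2 * Real.cos (2 * (θ - θ₀)))) =
        2 * a ^ 2 * (β - α) + r₀ ^ 2 * (Real.sin (2 * (β - θ₀)) - Real.sin (2 * (α - θ₀))) := by
    intro α β
    have hderiv : ∀ x ∈ Set.uIcc α β,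
        HasDerivAt (fun θ => 2 * a ^ 2 * θ + r₀ ^ 2 * Real.sin (2 * (θ - θ₀)))
          (2 * a ^ 2 + 2 * r₀ ^ 2 * Real.cos (2 * (x - θ₀))) x := by
      intro x _
      have h1 : HasDerivAt (fun θ : ℝ => 2 * (θ - θ₀)) 2 x := by
        simpa using ((hasDerivAt_id x).sub_const θ₀).const_mul 2
      have h2 : HasDerivAt (fun θ : ℝ => Real.sin (2 * (θ - θ₀)))
          (Real.cos (2 * (x - θ₀)) * 2) x := (Real.hasDerivAt_sin _).comp x h1
      have h3 : HasDerivAt (fun θ => 2 * a ^ 2 * θ + r₀ ^ 2 * Real.sin (2 * (θ - θ₀)))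
          (2 * a ^ 2 * 1 + r₀ ^ 2 * (Real.cos (2 * (x - θ₀)) * 2)) x := ((hasDerivAt_id x).const_mul (2 * a ^ 2)).add (h2.const_mul (r₀ ^ 2))
      convert h3 using 1
      ring
    have hintg : IntervalIntegrable
        (fun θ => 2 * a ^ 2 + 2 * r₀ ^ 2 * Real.cos (2 * (θ - θ₀))) MeasureTheory.volume α β := by
      apply Continuous.intervalIntegrable; fun_prop
    rw [intervalIntegral.integral_eq_sub_of_hasDerivAt hderiv hintg]
    ring
  have key : ∀ α β : ℝ, α ≤ β → S α β + S (α + π) (β + π) =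
      a ^ 2 * (β - α) + r₀ ^ 2 / 2 * (Real.sin (2 * (β - θ₀)) - Real.sin (2 * (α - θ₀))) := by
    intro α β hab
    rw [hS α β hab, hS (α + π) (β + π) (by linarith)]
    have hfe : ∀ γ δ : ℝ, (∫ θ in γ..δ,
        (r₀ * Real.cos (θ - θ₀) + Real.sqrt (a ^ 2 - r₀ ^ 2 * Real.sin (θ - θ₀) ^ 2)) ^ 2)
        = ∫ θ in γ..δ, f θ := fun _ _ => rfl
    rw [hfe, hfe]
    have h2 : (∫ θ in (α + π)..(β + π), f θ) = ∫ θ in α..β, f (θ + π) :=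
      (intervalIntegral.integral_comp_add_right f π).symm
    have hI : (∫ θ in α..β, f θ) + (∫ θ in α..β, f (θ + π))
        = ∫ θ in α..β, (f θ + f (θ + π)) :=
      (intervalIntegral.integral_add (hcont.intervalIntegrable _ _)
        ((hcont.comp (continuous_id.add continuous_const)).intervalIntegrable _ _)).symm
    have hc : (∫ θ in α..β, (f θ + f (θ + π)))
        = ∫ θ in α..β, (2 * a ^ 2 + 2 * r₀ ^ 2 * Real.cos (2 * (θ - θ₀))) :=
      intervalIntegral.integral_congr (fun θ _ => hsum θ)
    rw [h2]
    have := hint α β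
    linarith [hI, hc, this]
  have hper : ∀ x : ℝ, Real.sin (2 * ((x + π) - θ₀)) = Real.sin (2 * (x - θ₀)) := by
    intro x
    rw [show 2 * ((x + π) - θ₀) = 2 * (x - θ₀) + 2 * π by ring, Real.sin_add_two_pi]
  have k12 := key θ₁ θ₂ h12.le
  have k34 := key θ₃ θ₄ h34.le
  have k23 := key θ₂ θ₃ h23.le
  have k41 := key θ₄ (θ₁ + π) h41.le
  have h2pi : θ₁ + 2 * π = (θ₁ + π) + π := by ring
  rw [h2pi]
  have hp1 := hper θ₁
  constructor <;> intro h <;> nlinarith [k12, k34, k23, k41, h]
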